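/- For two orthonormal bases (e_i), (f_j) of a finite-dimensional space, unit vector ψ with ⟨e_x,ψ⟩ ≠ 0, the generalized conditional probability Tr(ρ ∘ P_{e_x} ∘ P_{f_p}) / Tr(ρ ∘ P_{e_x}) equals ⟨ψ, f_p⟩⟨f_p, e_x⟩ / ⟨ψ, e_x⟩ (the weak value formula). -/

import Mathlib

open scoped InnerProductSpace

/-- The rank-one operator `|ψ⟩⟨ψ| : x ↦ ⟨ψ, x⟩ • ψ`. -/
noncomputable def ketbra {H : Type*} [NormedAddCommGroup H] [InnerProductSpace ℂ H]
    (ψ : H) : H →ₗ[ℂ] H :=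
  (innerₛₗ ℂ ψ).smulRight ψ

lemma trace_smulRight' {H : Type*} [AddCommGroup H] [Module ℂ H]
    [Module.Finite ℂ H] [Module.Free ℂ H] (φ : Module.Dual ℂ H) (v : H) :
    LinearMap.trace ℂ H (φ.smulRight v) = φ v := by
  have hd : (dualTensorHom ℂ H H) (φ ⊗ₜ[ℂ] v) = φ.smulRight v := by
    ext x; simp [dualTensorHom_apply]
  have := LinearMap.trace_eq_contract_apply ℂ H (φ ⊗ₜ[ℂ] v)
  rwa [hd, contractLeft_apply] at this

/-- The weak value formula: for unit vectors `ψ`, `eₓ`, `f_p` with `⟨eₓ, ψ⟩ ≠ 0`,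
the generalized conditional probability `Tr(ρ ∘ P_{eₓ} ∘ P_{f_p}) / Tr(ρ ∘ P_{eₓ})`
equals `⟨ψ, f_p⟩⟨f_p, eₓ⟩ / ⟨ψ, eₓ⟩` (inner products linear in the first slot,
i.e. `⟨a, b⟩ = ⟪b, a⟫_ℂ`). -/
theorem stmt14 {H : Type*} [NormedAddCommGroup H] [InnerProductSpace ℂ H]
    [FiniteDimensional ℂ H] (ψ ex fp : H) (hψ : ‖ψ‖ = 1) (hex : ‖ex‖ = 1)
    (hfp : ‖fp‖ = 1) (hne : ⟪ex, ψ⟫_ℂ ≠ 0) :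
    LinearMap.trace ℂ H (ketbra ψ ∘ₗ ketbra ex ∘ₗ ketbra fp) /
        LinearMap.trace ℂ H (ketbra ψ ∘ₗ ketbra ex) =
      ⟪fp, ψ⟫_ℂ * ⟪ex, fp⟫_ℂ / ⟪ex, ψ⟫_ℂ := by
  have h1 : ketbra ψ ∘ₗ ketbra ex ∘ₗ ketbra fp
      = (innerₛₗ ℂ fp).smulRight ((⟪ex, fp⟫_ℂ * ⟪ψ, ex⟫_ℂ) • ψ) := by
    ext x
    simp only [ketbra, LinearMap.comp_apply, LinearMap.smulRight_apply, innerₛₗ_apply_apply,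
      inner_smul_right, smul_smul]
    ring_nf
  have h2 : ketbra ψ ∘ₗ ketbra ex
      = (innerₛₗ ℂ ex).smulRight (⟪ψ, ex⟫_ℂ • ψ) := by
    ext x
    simp only [ketbra, LinearMap.comp_apply, LinearMap.smulRight_apply, innerₛₗ_apply_apply,
      inner_smul_right, smul_smul]
  rw [h1, h2, trace_smulRight', trace_smulRight']
  simp only [innerₛₗ_apply_apply, inner_smul_right]
  have hne' : ⟪ψ, ex⟫_ℂ ≠ 0 := by
    intro h
    exact hne (by rw [← inner_conj_symm ex ψ, h, map_zero])
  field_simp
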